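/- Let ϑ be a unital *-endomorphism of B(H) and ξ ∈ H a unit vector. The map (x, y) ↦ ϑ(x ξ*) y from H × (ϑ(ξξ*)H) to H induces an isometry v : H ⊗ (ϑ(ξξ*)H) → H, i.e. ⟨ϑ(xξ*)y, ϑ(x'ξ*)y'⟩ = ⟨x,x'⟩⟨y,y'⟩ for all x,x' ∈ H and y, y' in the range of the projection ϑ(ξξ*). -/

import Mathlib

open scoped InnerProductSpace

/-- The rank-one operator `u v* : z ↦ u⟨v,z⟩`. -/
noncomputable def rankOne {H : Type*} [NormedAddCommGroup H] [InnerProductSpace ℂ H]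
    (u v : H) : H →L[ℂ] H :=
  (innerSL ℂ v).smulRight u

lemma rankOne_apply {H : Type*} [NormedAddCommGroup H] [InnerProductSpace ℂ H]
    (u v z : H) : rankOne u v z = ⟪v, z⟫_ℂ • u := rfl

lemma rankOne_adjoint {H : Type*} [NormedAddCommGroup H] [InnerProductSpace ℂ H]
    [CompleteSpace H] (u v : H) :
    ContinuousLinearMap.adjoint (rankOne u v) = rankOne v u := by
  ext z
  refine ext_inner_right ℂ fun w => ?_
  rw [ContinuousLinearMap.adjoint_inner_left]
  simp [rankOne_apply, inner_smul_left, inner_smul_right, mul_comm]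

/-- Let `ϑ` be a unital *-endomorphism of `B(H)` and `ξ` a unit vector.  The map
`(x, y) ↦ ϑ(xξ*) y` from `H × ϑ(ξξ*)H` to `H` induces an isometry
`H ⊗ ϑ(ξξ*)H → H`:  `⟨ϑ(xξ*)y, ϑ(x'ξ*)y'⟩ = ⟨x,x'⟩⟨y,y'⟩` for `x, x' ∈ H` and
`y, y'` in the range of the projection `ϑ(ξξ*)`. -/
theorem bhat_isometry {H : Type*} [NormedAddCommGroup H] [InnerProductSpace ℂ H]
    [CompleteSpace H]
    (ϑ : (H →L[ℂ] H) →⋆ₐ[ℂ] (H →L[ℂ] H))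
    (ξ : H) (hξ : ⟪ξ, ξ⟫_ℂ = 1)
    (x x' y y' : H)
    (hy : y ∈ Set.range (ϑ (rankOne ξ ξ)))
    (hy' : y' ∈ Set.range (ϑ (rankOne ξ ξ))) :
    ⟪ϑ (rankOne x ξ) y, ϑ (rankOne x' ξ) y'⟫_ℂ = ⟪x, x'⟫_ℂ * ⟪y, y'⟫_ℂ := by
  have hmul : star (rankOne x ξ) * rankOne x' ξ = ⟪x, x'⟫_ℂ • rankOne ξ ξ := by
    rw [ContinuousLinearMap.star_eq_adjoint, rankOne_adjoint]
    ext z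
    simp [rankOne_apply, mul_comm, mul_left_comm, smul_smul]
  have hidem : rankOne ξ ξ * rankOne ξ ξ = rankOne ξ ξ := by
    ext z
    simp [rankOne_apply, inner_smul_right, hξ, ← inner_self_eq_norm_sq_to_K]
  have hfix : ϑ (rankOne ξ ξ) y' = y' := by
    obtain ⟨w, rfl⟩ := hy'
    have := congrArg ϑ hidem
    rw [map_mul] at this
    calc ϑ (rankOne ξ ξ) (ϑ (rankOne ξ ξ) w)
        = (ϑ (rankOne ξ ξ) * ϑ (rankOne ξ ξ)) w := rfl
      _ = ϑ (rankOne ξ ξ) w := by rw [this]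
  calc ⟪ϑ (rankOne x ξ) y, ϑ (rankOne x' ξ) y'⟫_ℂ
      = ⟪y, ContinuousLinearMap.adjoint (ϑ (rankOne x ξ)) (ϑ (rankOne x' ξ) y')⟫_ℂ := by
        rw [ContinuousLinearMap.adjoint_inner_right]
    _ = ⟪y, (star (ϑ (rankOne x ξ)) * ϑ (rankOne x' ξ)) y'⟫_ℂ := by
        rw [ContinuousLinearMap.star_eq_adjoint]; rfl
    _ = ⟪y, (ϑ (star (rankOne x ξ) * rankOne x' ξ)) y'⟫_ℂ := by
        rw [map_mul, map_star]
    _ = ⟪y, ⟪x, x'⟫_ℂ • ϑ (rankOne ξ ξ) y'⟫_ℂ := by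
        rw [hmul, map_smul]; rfl
    _ = ⟪x, x'⟫_ℂ * ⟪y, y'⟫_ℂ := by rw [hfix, inner_smul_right]
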